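/- Let B be a nontrivial Boolean ring and G an abelian group with trivial 2-torsion such that G is a torsion q-group for an odd prime q. Then the Jacobson radical of the group ring B[G] is zero. -/

import Mathlib

theorem boolean_group_ring_jacobson_zero (B : Type*) [CommRing B] [Nontrivial B]
    (hB : ∀ x : B, x * x = x) (G : Type*) [CommGroup G]
    (h2 : ∀ g : G, g ^ 2 = 1 → g = 1) (q : ℕ) (hq : q.Prime) (hodd : Odd q)
    (hG : ∀ g : G, ∃ n : ℕ, g ^ (q ^ n) = 1) :
    Ideal.jacobson (⊥ : Ideal (MonoidAlgebra B G)) = ⊥ := by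
  classical
  have hB2 : (2 : B) = 0 := by linear_combination hB 2
  -- characteristic 2 in the monoid algebra
  have hchar : (2 : MonoidAlgebra B G) = 0 := by
    have h1 : (1 : MonoidAlgebra B G) = MonoidAlgebra.single 1 1 := rfl
    have : (2 : MonoidAlgebra B G) = (1 : MonoidAlgebra B G) + 1 := by norm_num
    rw [this, h1, ← MonoidAlgebra.single_add]
    have : (1 : B) + 1 = 0 := by linear_combination hB2
    rw [this, MonoidAlgebra.single_zero]
  -- squaring acts on supports
  have hsq : ∀ x : MonoidAlgebra B G, x ^ 2 = MonoidAlgebra.mapDomain (· ^ 2) x := by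
    intro x
    induction x using MonoidAlgebra.induction with
    | zero => simp
    | single_add a b f ha hb ih =>
      have hadd : ∀ u v : MonoidAlgebra B G, (u + v) ^ 2 = u ^ 2 + v ^ 2 := by
        intro u v; linear_combination (u * v) * hchar
      rw [hadd, ih, MonoidAlgebra.mapDomain_add, MonoidAlgebra.mapDomain_single]
      congr 1
      have : (MonoidAlgebra.single a b : MonoidAlgebra B G) ^ 2 =
          MonoidAlgebra.single a b * MonoidAlgebra.single a b := sq _
      rw [this, MonoidAlgebra.single_mul_single, hB b, ← sq]
  have hpow : ∀ (m : ℕ) (x : MonoidAlgebra B G),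
      x ^ 2 ^ m = MonoidAlgebra.mapDomain (· ^ 2 ^ m) x := by
    intro m
    induction m with
    | zero => intro x; simp only [pow_zero, pow_one]; exact (congrArg MonoidAlgebra.ofCoeff (Finsupp.mapDomain_id (v := x.coeff))).symm
    | succ m ih =>
      intro x
      have : x ^ 2 ^ (m + 1) = (x ^ 2 ^ m) ^ 2 := by
        rw [← pow_mul, pow_succ]
      rw [this, hsq, ih]
      unfold MonoidAlgebra.mapDomain
      rw [MonoidAlgebra.coeff_ofCoeff, ← Finsupp.mapDomain_comp]
      congr 1
      apply Finsupp.mapDomain_congr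
      intro g _
      simp only [Function.comp_apply]
      rw [← pow_mul, ← pow_succ]
  -- each element of G is fixed by some iterate of squaring
  have hstab : ∀ (g : G) (m t : ℕ), g ^ 2 ^ m = g → g ^ 2 ^ (m * t) = g := by
    intro g m t hg
    induction t with
    | zero => simp
    | succ t ih =>
      rw [Nat.mul_succ, pow_add, pow_mul, ih, hg]
  have helt : ∀ g : G, ∃ m, 1 ≤ m ∧ g ^ 2 ^ m = g := by
    intro g
    obtain ⟨n, hn⟩ := hG g
    refine ⟨(q ^ n).totient, Nat.totient_pos.mpr (pow_pos hq.pos n), ?_⟩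
    have hcop : Nat.Coprime 2 (q ^ n) :=
      (Nat.coprime_two_left.mpr hodd).pow_right n
    have heuler : 2 ^ (q ^ n).totient ≡ 1 [MOD q ^ n] := Nat.ModEq.pow_totient hcop
    have h1le : 1 ≤ 2 ^ (q ^ n).totient := Nat.one_le_two_pow
    have hdvd : q ^ n ∣ 2 ^ (q ^ n).totient - 1 :=
      (Nat.modEq_iff_dvd' h1le).mp heuler.symm
    obtain ⟨t, ht⟩ := hdvd
    have : 2 ^ (q ^ n).totient = q ^ n * t + 1 := by omega
    rw [this, pow_add, pow_mul, hn, one_pow, one_mul, pow_one]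
  have key : ∀ s : Finset G, ∃ M, 1 ≤ M ∧ ∀ g ∈ s, g ^ 2 ^ M = g := by
    intro s
    induction s using Finset.induction with
    | empty => exact ⟨1, le_refl 1, by simp⟩
    | insert _ _ hnotmem =>
      rename_i a s ihs
      obtain ⟨M, hM1, hM⟩ := ihs
      obtain ⟨m, hm1, hm⟩ := helt a
      refine ⟨m * M, Nat.one_le_iff_ne_zero.mpr (by positivity), ?_⟩
      intro g hg
      rcases Finset.mem_insert.mp hg with h | h
      · subst h; exact hstab g m M hm
      · rw [mul_comm]; exact hstab g M m (hM g h)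
  -- main argument
  rw [eq_bot_iff]
  intro x hx
  rw [Ideal.mem_jacobson_bot] at hx
  obtain ⟨M, hM1, hM⟩ := key x.coeff.support
  have hxM : x ^ 2 ^ M = x := by
    rw [hpow]
    unfold MonoidAlgebra.mapDomain
    rw [Finsupp.mapDomain_congr (g := id) (fun g hg => hM g hg)]
    exact congrArg MonoidAlgebra.ofCoeff Finsupp.mapDomain_id
  have h2M : 2 ≤ 2 ^ M := by
    calc 2 = 2 ^ 1 := (pow_one 2).symm
    _ ≤ 2 ^ M := Nat.pow_le_pow_right (by norm_num) hM1
  have e1 : x * x ^ (2 ^ M - 2) = x ^ (2 ^ M - 1) := by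
    rw [← pow_succ']
    congr 1
    omega
  have hu : IsUnit (x ^ (2 ^ M - 1) + 1) := by
    rw [← e1]; exact hx (x ^ (2 ^ M - 2))
  have hz : x * (x ^ (2 ^ M - 1) + 1) = 0 := by
    have e2 : x * x ^ (2 ^ M - 1) = x ^ 2 ^ M := by
      rw [← pow_succ']
      congr 1
      omega
    rw [mul_add, mul_one, e2, hxM]
    linear_combination x * hchar
  exact Ideal.mem_bot.mpr ((hu.mul_left_eq_zero).mp hz)
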